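/- arXiv:2405.02921 — 2 statements merged into one kernel-verified Lean document; each statement's English description precedes it below -/
import Mathlib

section
/- Let A be an Artin algebra and X, Y finitely generated A-modules with [X]_{n₁} ⊆ [Y]_{n₂} for positive integers n₁, n₂. Then for every m ≥ 0, [Ω^m(X)]_{n₁} ⊆ [Ω^m(Y)]_{n₁·n₂}, where Ω^m denotes the m-th syzygy. -/
open CategoryTheory

universe u

namespace Paper

variable (A : Type u) [Ring A]

/-- A short exact sequence `0 → X → Y → Z → 0` of `A`-modules. -/
def SES (X Y Z : ModuleCat.{u} A) : Prop :=
  ∃ (f : X →ₗ[A] Y) (g : Y →ₗ[A] Z),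
    Function.Injective f ∧ Function.Surjective g ∧ LinearMap.range f = LinearMap.ker g

/-- `M` is a direct summand of `X`. -/
def IsSummand (M X : ModuleCat.{u} A) : Prop :=
  ∃ (i : M →ₗ[A] X) (r : X →ₗ[A] M), r.comp i = LinearMap.id

/-- The additive closure `add 𝒯`: direct summands of finite direct sums of objects of `𝒯`. -/
def addClosure (T : Set (ModuleCat.{u} A)) : Set (ModuleCat.{u} A) :=
  { M | ∃ (n : ℕ) (f : Fin n → ModuleCat.{u} A), (∀ j, f j ∈ T) ∧
      IsSummand A M (ModuleCat.of A (∀ j, (f j : Type u))) }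

/-- The extension product `𝒞 • 𝒟`: (summands of) extensions of a module of `𝒟`
by a module of `𝒞`. -/
def bullet (C D : Set (ModuleCat.{u} A)) : Set (ModuleCat.{u} A) :=
  addClosure A { X | ∃ C' ∈ C, ∃ D' ∈ D, SES A C' X D' }

/-- `[𝒯]ₙ`, defined by `[𝒯]₀ = {0}`, `[𝒯]₁ = add 𝒯` and `[𝒯]ₙ = [𝒯]₁ • [𝒯]ₙ₋₁`. -/
def bracket (T : Set (ModuleCat.{u} A)) : ℕ → Set (ModuleCat.{u} A)
  | 0 => { M | ∀ x : M, x = 0 }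
  | 1 => addClosure A T
  | n + 2 => bullet A (addClosure A T) (bracket T (n + 1))

/-- The class `𝒯₁ ⊕ 𝒯₂ = {X ⊕ Y | X ∈ 𝒯₁, Y ∈ 𝒯₂}`. -/
def setSum (T1 T2 : Set (ModuleCat.{u} A)) : Set (ModuleCat.{u} A) :=
  { M | ∃ X ∈ T1, ∃ Y ∈ T2, Nonempty ((M : Type u) ≃ₗ[A] (↥X × ↥Y)) }

/-- The extension dimension of a subcategory `𝒞` of `A`-mod:
the least `n` such that `𝒞 ⊆ [T]_{n+1}` for some finitely generated module `T`. -/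
noncomputable def ed (C : Set (ModuleCat.{u} A)) : ℕ∞ :=
  sInf { n : ℕ∞ | ∃ m : ℕ, n = (m : ℕ∞) ∧
    ∃ T : ModuleCat.{u} A, Module.Finite A T ∧ C ⊆ bracket A {T} (m + 1) }

/-- The category `Ωⁿ(A-mod)` of `n`-th syzygy modules: finitely generated `K` admitting
an exact sequence `0 → K → P⁰ → ⋯ → P^{n-1} → M → 0` with all `Pⁱ` projective,
encoded by a chain of short exact sequences. -/
def SyzCat (n : ℕ) : Set (ModuleCat.{u} A) :=
  { K | Module.Finite A K ∧
    ∃ (Ks : Fin (n + 1) → ModuleCat.{u} A) (P : Fin n → ModuleCat.{u} A),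
      Ks 0 = K ∧ (∀ i, Module.Finite A (Ks i)) ∧
      (∀ i, Module.Finite A (P i) ∧ Module.Projective A (P i)) ∧
      ∀ i : Fin n, SES A (Ks i.castSucc) (P i) (Ks i.succ) }

/-- The category `Ω^∞(A-mod)` of infinite syzygy modules: finitely generated `K` admitting
an exact sequence `0 → K → P⁰ → P¹ → ⋯` with all `Pⁱ` projective. -/
def InfSyzCat : Set (ModuleCat.{u} A) :=
  { K | Module.Finite A K ∧
    ∃ Ks P : ℕ → ModuleCat.{u} A,
      Ks 0 = K ∧ (∀ i, Module.Finite A (Ks i)) ∧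
      (∀ i, Module.Finite A (P i) ∧ Module.Projective A (P i)) ∧
      ∀ i : ℕ, SES A (Ks i) (P i) (Ks (i + 1)) }

/-- A submodule is superfluous (small). -/
def Superfluous {M : ModuleCat.{u} A} (N : Submodule A M) : Prop :=
  ∀ N' : Submodule A M, N ⊔ N' = ⊤ → N' = ⊤

/-- `K` is the (minimal) syzygy `Ω(M)`: the kernel of a projective cover `P → M`. -/
def IsSyzygyOf (K M : ModuleCat.{u} A) : Prop :=
  ∃ (P : ModuleCat.{u} A) (i : K →ₗ[A] P) (p : P →ₗ[A] M),
    Module.Projective A P ∧ Function.Injective i ∧ Function.Surjective p ∧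
    LinearMap.range i = LinearMap.ker p ∧ Superfluous A (LinearMap.ker p)

/-- `K ≅ Ωⁿ(M)`. -/
def IsIterSyzygyOf : ℕ → ModuleCat.{u} A → ModuleCat.{u} A → Prop
  | 0, K, M => Nonempty ((K : Type u) ≃ₗ[A] M)
  | n + 1, K, M => ∃ L, IsIterSyzygyOf n L M ∧ IsSyzygyOf A K L

/-- A submodule is essential. -/
def EssentialIn {M : ModuleCat.{u} A} (N : Submodule A M) : Prop :=
  ∀ N' : Submodule A M, N ⊓ N' = ⊥ → N' = ⊥

/-- `C` is the cosyzygy `Ω⁻¹(M)`: the cokernel of an injective envelope `M → I`. -/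
def IsCosyzygyOf (C M : ModuleCat.{u} A) : Prop :=
  ∃ (I : ModuleCat.{u} A) (j : M →ₗ[A] I) (q : I →ₗ[A] C),
    Module.Injective A I ∧ Function.Injective j ∧ Function.Surjective q ∧
    LinearMap.range j = LinearMap.ker q ∧ EssentialIn A (LinearMap.range j)

/-- `C ≅ Ω⁻ⁿ(M)`. -/
def IsIterCosyzygyOf : ℕ → ModuleCat.{u} A → ModuleCat.{u} A → Prop
  | 0, C, M => Nonempty ((C : Type u) ≃ₗ[A] M)
  | n + 1, C, M => ∃ L, IsIterCosyzygyOf n L M ∧ IsCosyzygyOf A C L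

variable {A}

/-! ### Basic API -/

abbrev Triv (M : ModuleCat.{u} A) : Prop := ∀ x : M, x = 0

abbrev Z0 : ModuleCat.{u} A := ModuleCat.of A PUnit.{u+1}

lemma triv_Z0 : Triv (Z0 : ModuleCat.{u} A) := fun _ => rfl

lemma Triv.of_equiv {M N : ModuleCat.{u} A} (hM : Triv M) (e : (M : Type u) ≃ₗ[A] (N : Type u)) :
    Triv N := fun x => by
  have : x = e (e.symm x) := (e.apply_symm_apply x).symm
  rw [this, hM (e.symm x), map_zero]

lemma IsSummand.refl {M : ModuleCat.{u} A} : IsSummand A M M :=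
  ⟨LinearMap.id, LinearMap.id, by ext x; rfl⟩

lemma IsSummand.trans {M N P : ModuleCat.{u} A} (h1 : IsSummand A M N) (h2 : IsSummand A N P) :
    IsSummand A M P := by
  obtain ⟨i1, r1, h1⟩ := h1
  obtain ⟨i2, r2, h2⟩ := h2
  refine ⟨i2.comp i1, r1.comp r2, ?_⟩
  ext x
  have e2 : r2 (i2 (i1 x)) = i1 x := by simpa using congrArg (fun f => f (i1 x)) h2
  have e1 : r1 (i1 x) = x := by simpa using congrArg (fun f => f x) h1
  simp only [LinearMap.comp_apply, LinearMap.id_apply]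
  rw [e2, e1]

lemma IsSummand.of_equiv {M N : ModuleCat.{u} A} (e : (M : Type u) ≃ₗ[A] (N : Type u)) :
    IsSummand A M N :=
  ⟨(e : M →ₗ[A] N), (e.symm : N →ₗ[A] M), by ext x; simp⟩

lemma IsSummand.of_triv {M N : ModuleCat.{u} A} (hM : Triv M) : IsSummand A M N :=
  ⟨0, 0, by ext x; exact ((hM x).symm : (0 : ↑M) = x)⟩

lemma Triv.of_summand {M N : ModuleCat.{u} A} (hN : Triv N) (h : IsSummand A M N) : Triv M := by
  obtain ⟨i, r, hir⟩ := h
  intro x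
  have : r (i x) = x := by simpa using congrArg (fun f => f x) hir
  rw [← this, hN (i x), map_zero]

lemma IsSummand.pi {n : ℕ} {M X : Fin n → ModuleCat.{u} A}
    (h : ∀ j, IsSummand A (M j) (X j)) :
    IsSummand A (ModuleCat.of A (∀ j, (M j : Type u))) (ModuleCat.of A (∀ j, (X j : Type u))) := by
  choose i r hir using h
  refine ⟨LinearMap.pi (fun j => (i j).comp (LinearMap.proj j)),
          LinearMap.pi (fun j => (r j).comp (LinearMap.proj j)), ?_⟩
  refine LinearMap.ext (fun x => ?_)
  funext j
  have := congrArg (fun f => f (x j)) (hir j)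
  simpa using this

lemma IsSummand.prodMap {M X N Y : ModuleCat.{u} A}
    (h1 : IsSummand A M X) (h2 : IsSummand A N Y) :
    IsSummand A (ModuleCat.of A (↥M × ↥N)) (ModuleCat.of A (↥X × ↥Y)) := by
  obtain ⟨i1, r1, h1⟩ := h1
  obtain ⟨i2, r2, h2⟩ := h2
  refine ⟨i1.prodMap i2, r1.prodMap r2, ?_⟩
  refine LinearMap.ext (fun x => ?_)
  have e1 := congrArg (fun f => f x.1) h1
  have e2 := congrArg (fun f => f x.2) h2
  simp only [LinearMap.comp_apply] at e1 e2
  show (r1.prodMap r2) ((i1.prodMap i2) x) = x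
  cases x with
  | mk a b => simp [LinearMap.prodMap_apply, e1, e2]

lemma isSummand_piFinSucc {n : ℕ} (B : Fin (n+1) → ModuleCat.{u} A) :
    IsSummand A (ModuleCat.of A (∀ j, (B j : Type u)))
      (ModuleCat.of A (↥(B 0) × (∀ j : Fin n, ↥(B j.succ)))) := by
  refine ⟨LinearMap.prod (LinearMap.proj 0) (LinearMap.pi (fun j => LinearMap.proj j.succ)),
          LinearMap.pi (fun j => Fin.cases (LinearMap.fst A _ _)
            (fun k => (LinearMap.proj k).comp (LinearMap.snd A _ _)) j), ?_⟩
  refine LinearMap.ext (fun x => ?_)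
  funext j
  refine Fin.cases ?_ (fun k => ?_) j <;> rfl

noncomputable def prodPowEquiv (a b : ℕ) (T : Type u) [AddCommGroup T] [Module A T] :
    ((Fin a → T) × (Fin b → T)) ≃ₗ[A] (Fin (a+b) → T) :=
  (LinearEquiv.sumArrowLequivProdArrow _ _ A T).symm.trans
    (LinearEquiv.funCongrLeft A T finSumFinEquiv.symm)

/-- pi of modules, each a summand of a finite power of `T`, is a summand of a finite power. -/
lemma isSummand_pow_pi {T : ModuleCat.{u} A} :
    ∀ {r : ℕ} (M : Fin r → ModuleCat.{u} A),
      (∀ j, ∃ k, IsSummand A (M j) (ModuleCat.of A (Fin k → (T : Type u)))) →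
      ∃ K, IsSummand A (ModuleCat.of A (∀ j, (M j : Type u)))
        (ModuleCat.of A (Fin K → (T : Type u)))
  | 0, M, _ => ⟨0, IsSummand.of_triv (fun x => funext (fun j => j.elim0))⟩
  | r+1, M, h => by
    obtain ⟨K', hK'⟩ := isSummand_pow_pi (fun j : Fin r => M j.succ) (fun j => h j.succ)
    obtain ⟨k0, hk0⟩ := h 0
    refine ⟨k0 + K', (isSummand_piFinSucc M).trans ((hk0.prodMap hK').trans
      (IsSummand.of_equiv (prodPowEquiv k0 K' (T : Type u))))⟩

/-- Finite powers of a projective module are projective. -/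
lemma projective_pi_fin {P : Type u} [AddCommGroup P] [Module A P] (hP : Module.Projective A P) :
    ∀ k : ℕ, Module.Projective A (Fin k → P)
  | 0 => by
    refine Module.Projective.of_split (M := P) 0 0
      (LinearMap.ext (fun x => funext (fun j => j.elim0)))
  | k+1 => by
    have := projective_pi_fin hP k
    have : Module.Projective A (P × (Fin k → P)) := inferInstance
    refine Module.Projective.of_split (M := P × (Fin k → P))
      (LinearMap.prod (LinearMap.proj 0) (LinearMap.pi (fun j => LinearMap.proj j.succ)))
      (LinearMap.pi (fun j => Fin.cases (LinearMap.fst A _ _)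
        (fun k' => (LinearMap.proj k').comp (LinearMap.snd A _ _)) j)) ?_
    refine LinearMap.ext (fun x => funext (fun j => ?_))
    refine Fin.cases ?_ (fun k' => ?_) j <;> rfl

/-! ### SES API -/

lemma SES.congr {C W V C' W' V' : ModuleCat.{u} A} (h : SES A C W V)
    (eC : (C : Type u) ≃ₗ[A] (C' : Type u)) (eW : (W : Type u) ≃ₗ[A] (W' : Type u))
    (eV : (V : Type u) ≃ₗ[A] (V' : Type u)) : SES A C' W' V' := by
  obtain ⟨f, g, hf, hg, hr⟩ := h
  refine ⟨(eW : W →ₗ[A] W').comp (f.comp (eC.symm : C' →ₗ[A] C)),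
          (eV : V →ₗ[A] V').comp (g.comp (eW.symm : W' →ₗ[A] W)), ?_, ?_, ?_⟩
  · intro a b hab
    simp only [LinearMap.comp_apply, LinearEquiv.coe_coe] at hab
    have := hf (eW.injective hab)
    exact eC.symm.injective this
  · intro v
    obtain ⟨w, hw⟩ := hg (eV.symm v)
    exact ⟨eW w, by simp [hw]⟩
  · ext x
    simp only [LinearMap.mem_range, LinearMap.mem_ker, LinearMap.comp_apply,
      LinearEquiv.coe_coe]
    constructor
    · rintro ⟨c, rfl⟩
      have : f (eC.symm c) ∈ LinearMap.ker g := hr ▸ LinearMap.mem_range_self f _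
      simp only [LinearMap.mem_ker] at this
      rw [eW.symm_apply_apply, this, map_zero]
    · intro hx
      have h0 : g (eW.symm x) = 0 := by
        have := congrArg eV.symm hx
        simpa using this
      have : eW.symm x ∈ LinearMap.range f := by rw [hr]; exact h0
      obtain ⟨c, hc⟩ := this
      exact ⟨eC c, by rw [eC.symm_apply_apply, hc, eW.apply_symm_apply]⟩

lemma ses_id_zero (M : ModuleCat.{u} A) : SES A M M Z0 := by
  refine ⟨LinearMap.id, 0, fun a b h => h, fun v => ⟨0, Subsingleton.elim (α := PUnit.{u+1}) _ _⟩,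
    ?_⟩
  ext x
  simp

lemma SES.equiv_of_triv_right {C W V : ModuleCat.{u} A} (h : SES A C W V) (hV : Triv V) :
    Nonempty ((C : Type u) ≃ₗ[A] (W : Type u)) := by
  obtain ⟨f, g, hf, _, hr⟩ := h
  have hker : LinearMap.ker g = ⊤ := by
    ext x; simp [hV (g x)]
  have hsurj : Function.Surjective f := by
    rw [← LinearMap.range_eq_top, hr, hker]
  exact ⟨LinearEquiv.ofBijective f ⟨hf, hsurj⟩⟩

lemma SES.equiv_of_triv_left {C W V : ModuleCat.{u} A} (h : SES A C W V) (hC : Triv C) :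
    Nonempty ((W : Type u) ≃ₗ[A] (V : Type u)) := by
  obtain ⟨f, g, _, hg, hr⟩ := h
  have hrange : LinearMap.range f = ⊥ := by
    ext x
    simp only [LinearMap.mem_range, Submodule.mem_bot]
    constructor
    · rintro ⟨c, rfl⟩; rw [hC c, map_zero]
    · rintro rfl; exact ⟨0, map_zero f⟩
  have hinj : Function.Injective g := by
    rw [← LinearMap.ker_eq_bot, ← hr, hrange]
  exact ⟨LinearEquiv.ofBijective g ⟨hinj, hg⟩⟩

lemma ses_triv (M : ModuleCat.{u} A) (hM : Triv M) : SES A M M M := by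
  refine ⟨LinearMap.id, LinearMap.id, fun a b h => h, fun v => ⟨v, rfl⟩, ?_⟩
  ext x
  simp only [LinearMap.range_id, Submodule.mem_top, LinearMap.mem_ker, LinearMap.id_apply,
    true_iff]
  exact hM x

lemma SES.pi {n : ℕ} {C W V : Fin n → ModuleCat.{u} A}
    (h : ∀ j, SES A (C j) (W j) (V j)) :
    SES A (ModuleCat.of A (∀ j, (C j : Type u))) (ModuleCat.of A (∀ j, (W j : Type u)))
      (ModuleCat.of A (∀ j, (V j : Type u))) := by
  choose f g hf hg hr using h
  refine ⟨LinearMap.pi (fun j => (f j).comp (LinearMap.proj j)),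
          LinearMap.pi (fun j => (g j).comp (LinearMap.proj j)), ?_, ?_, ?_⟩
  · intro x y hxy
    funext j
    exact hf j (congrFun hxy j)
  · intro v
    choose w hw using fun j => hg j (v j)
    exact ⟨w, funext hw⟩
  · ext x
    simp only [LinearMap.mem_range, LinearMap.mem_ker]
    constructor
    · rintro ⟨c, rfl⟩
      funext j
      have : f j (c j) ∈ LinearMap.ker (g j) := (hr j) ▸ LinearMap.mem_range_self (f j) _
      simpa using this
    · intro hx
      have : ∀ j, x j ∈ LinearMap.range (f j) := by
        intro j
        rw [hr j]
        exact congrFun hx j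
      choose c hc using this
      exact ⟨c, funext hc⟩

/-! ### Fattening the ends of a SES -/

/-- If `0 → U → W → W' → 0` and `U` is a summand of `FU`, then `W` is a summand of some `W₂`
with `0 → FU → W₂ → W' → 0`. -/
lemma ses_fatten_sub {U W W' FU : ModuleCat.{u} A} (h : SES A U W W')
    (hs : IsSummand A U FU) :
    ∃ W₂ : ModuleCat.{u} A, IsSummand A W W₂ ∧ SES A FU W₂ W' := by
  obtain ⟨ι, π, hι, hπ, hr⟩ := h
  obtain ⟨i, r, hir⟩ := hs
  have hri : ∀ x : FU, r (i (r x)) = r x := by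
    intro x
    simpa using congrArg (fun f => f (r x)) hir
  have hRI : ∀ u : U, r (i u) = u := by
    intro u
    simpa using congrArg (fun f => f u) hir
  refine ⟨ModuleCat.of A (↥W × ↥(LinearMap.ker r)),
    ⟨LinearMap.inl A _ _, LinearMap.fst A _ _, by ext x; rfl⟩, ?_⟩
  -- f : FU → W × ker r, x ↦ (ι (r x), x - i (r x))
  refine ⟨LinearMap.prod (ι.comp r)
      (LinearMap.codRestrict (LinearMap.ker r) (LinearMap.id - i.comp r)
        (fun x => by simp [hri x])),
    (π.comp (LinearMap.fst A _ _)), ?_, ?_, ?_⟩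
  · intro x y hxy
    have h1 : ι (r x) = ι (r y) := congrArg Prod.fst hxy
    have h2 : x - i (r x) = y - i (r y) :=
      congrArg (fun z => ((Prod.snd z : ↥(LinearMap.ker r)) : ↑FU)) hxy
    have h3 : r x = r y := hι h1
    rw [h3] at h2
    exact sub_left_injective h2
  · intro w'
    obtain ⟨w, hw⟩ := hπ w'
    exact ⟨(w, 0), hw⟩
  · ext z
    simp only [LinearMap.mem_range, LinearMap.mem_ker, LinearMap.comp_apply]
    constructor
    · rintro ⟨x, rfl⟩
      have : ι (r x) ∈ LinearMap.ker π := hr ▸ LinearMap.mem_range_self ι _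
      simpa using this
    · rintro hz
      have : z.1 ∈ LinearMap.range ι := by rw [hr]; exact hz
      obtain ⟨u, hu⟩ := this
      refine ⟨i u + (z.2 : FU), ?_⟩
      have hru : r (i u + (z.2 : FU)) = u := by
        rw [map_add, hRI, (z.2).2, add_zero]
      apply Prod.ext
      · show ι (r _) = z.1
        rw [hru, hu]
      · show (⟨_ - i (r _), _⟩ : ↥(LinearMap.ker r)) = z.2
        apply Subtype.ext
        show (i u + (z.2 : FU)) - i (r (i u + (z.2 : FU))) = (z.2 : FU)
        rw [hru]
        abel

/-- If `0 → C → M → V → 0` and `V` is a summand of `V₂`, then `M` is a summand of some `M₂`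
with `0 → C → M₂ → V₂ → 0`. -/
lemma ses_fatten_quot {C M V V₂ : ModuleCat.{u} A} (h : SES A C M V)
    (hs : IsSummand A V V₂) :
    ∃ M₂ : ModuleCat.{u} A, IsSummand A M M₂ ∧ SES A C M₂ V₂ := by
  obtain ⟨ι, π, hι, hπ, hr⟩ := h
  obtain ⟨i, r, hir⟩ := hs
  have hRI : ∀ v : V, r (i v) = v := fun v => by simpa using congrArg (fun f => f v) hir
  refine ⟨ModuleCat.of A (↥M × ↥(LinearMap.ker r)),
    ⟨LinearMap.inl A _ _, LinearMap.fst A _ _, by ext x; rfl⟩, ?_⟩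
  -- f : C → M × ker r, c ↦ (ι c, 0);  g : (m, z) ↦ i (π m) + z
  refine ⟨(LinearMap.inl A _ _).comp ι,
    (i.comp (π.comp (LinearMap.fst A _ _))) +
      ((LinearMap.ker r).subtype.comp (LinearMap.snd A _ _)), ?_, ?_, ?_⟩
  · intro a b hab
    exact hι (congrArg Prod.fst hab)
  · intro v₂
    obtain ⟨m, hm⟩ := hπ (r v₂)
    have hz : r (v₂ - i (r v₂)) = 0 := by rw [map_sub, hRI, sub_self]
    refine ⟨(m, ⟨v₂ - i (r v₂), hz⟩), ?_⟩
    show i (π m) + (v₂ - i (r v₂)) = v₂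
    rw [hm]
    abel
  · ext z
    obtain ⟨m, w⟩ := z
    simp only [LinearMap.mem_range, LinearMap.mem_ker, LinearMap.add_apply,
      LinearMap.comp_apply, LinearMap.fst_apply, LinearMap.snd_apply,
      Submodule.coe_subtype, LinearMap.inl_apply]
    constructor
    · rintro ⟨c, hc⟩
      obtain ⟨rfl, rfl⟩ := Prod.mk.inj hc
      show i (π (ι c)) + ((0 : ↥(LinearMap.ker r)) : ↑V₂) = 0
      have hπι : π (ι c) = 0 := by
        have : ι c ∈ LinearMap.ker π := hr ▸ LinearMap.mem_range_self ι _
        simpa using this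
      rw [hπι, map_zero, zero_add]
      simp
    · intro hz
      replace hz : i (π m) + (w : ↑V₂) = 0 := hz
      have hw0 : r (w : ↑V₂) = 0 := w.2
      have h1 : π m = 0 := by
        have h0 := congrArg r hz
        rw [map_add, hRI, hw0, add_zero, map_zero] at h0
        exact h0
      have h3 : (w : ↑V₂) = 0 := by
        rw [h1, map_zero, zero_add] at hz
        exact hz
      have h2 : m ∈ LinearMap.range ι := by
        rw [hr]; exact h1
      obtain ⟨c, hc⟩ := h2
      exact ⟨c, Prod.ext hc (Subtype.ext h3.symm)⟩

/-! ### Filtered modules -/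

/-- `Filt C n` : modules admitting a filtration of length `n` with factors in `C`,
encoded by iterated short exact sequences. -/
def Filt (C : Set (ModuleCat.{u} A)) : ℕ → Set (ModuleCat.{u} A)
  | 0 => { M | Triv M }
  | n+1 => { W | ∃ C' ∈ C, ∃ V ∈ Filt C n, SES A C' W V }

lemma Filt.of_equiv {C : Set (ModuleCat.{u} A)} :
    ∀ {n : ℕ} {W W' : ModuleCat.{u} A}, W ∈ Filt C n →
      ((W : Type u) ≃ₗ[A] (W' : Type u)) → W' ∈ Filt C n
  | 0, W, W', hW, e => Triv.of_equiv hW e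
  | n+1, W, W', hW, e => by
    obtain ⟨C', hC', V, hV, hses⟩ := hW
    exact ⟨C', hC', V, hV, hses.congr (LinearEquiv.refl A _) e (LinearEquiv.refl A _)⟩

lemma Filt.mono_set {C D : Set (ModuleCat.{u} A)} (h : C ⊆ D) :
    ∀ {n : ℕ} {W : ModuleCat.{u} A}, W ∈ Filt C n → W ∈ Filt D n
  | 0, _, hW => hW
  | n+1, W, hW => by
    obtain ⟨C', hC', V, hV, hses⟩ := hW
    exact ⟨C', h hC', V, Filt.mono_set h hV, hses⟩

lemma triv_mem_filt {C : Set (ModuleCat.{u} A)} (hC : ∀ M : ModuleCat.{u} A, Triv M → M ∈ C) :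
    ∀ (n : ℕ) {M : ModuleCat.{u} A}, Triv M → M ∈ Filt C n
  | 0, _, hM => hM
  | n+1, M, hM => ⟨M, hC M hM, M, triv_mem_filt hC n hM, ses_triv M hM⟩

lemma mem_filt_of_mem {C : Set (ModuleCat.{u} A)}
    (hC : ∀ M : ModuleCat.{u} A, Triv M → M ∈ C) :
    ∀ (n : ℕ), 1 ≤ n → ∀ {T : ModuleCat.{u} A}, T ∈ C → T ∈ Filt C n
  | 0, h, _, _ => absurd h (by omega)
  | 1, _, T, hT => ⟨T, hT, Z0, triv_Z0, ses_id_zero T⟩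
  | n+2, _, T, hT =>
    ⟨T, hT, Z0, triv_mem_filt hC (n+1) triv_Z0, ses_id_zero T⟩

lemma Filt.pi {C : Set (ModuleCat.{u} A)}
    (hC : ∀ {k : ℕ} (f : Fin k → ModuleCat.{u} A), (∀ j, f j ∈ C) →
      ModuleCat.of A (∀ j, (f j : Type u)) ∈ C) :
    ∀ {n : ℕ} {r : ℕ} (W : Fin r → ModuleCat.{u} A), (∀ j, W j ∈ Filt C n) →
      ModuleCat.of A (∀ j, (W j : Type u)) ∈ Filt C n
  | 0, r, W, hW => fun x => funext (fun j => hW j (x j))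
  | n+1, r, W, hW => by
    choose Cj hCj Vj hVj hsesj using hW
    exact ⟨ModuleCat.of A (∀ j, (Cj j : Type u)), hC Cj hCj,
      ModuleCat.of A (∀ j, (Vj j : Type u)), Filt.pi hC Vj hVj, SES.pi hsesj⟩

/-- Filtrations concatenate along a SES. -/
lemma Filt.concat {C : Set (ModuleCat.{u} A)} :
    ∀ {a : ℕ} {b : ℕ} {F W G : ModuleCat.{u} A}, SES A F W G →
      F ∈ Filt C a → G ∈ Filt C b → W ∈ Filt C (a + b)
  | 0, b, F, W, G, hses, hF, hG => by
    obtain ⟨e⟩ := hses.equiv_of_triv_left hF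
    rw [Nat.zero_add]
    exact (Filt.of_equiv hG (by exact e.symm) : W ∈ Filt C b)
  | a+1, b, F, W, G, hses, hF, hG => by
    obtain ⟨C1, hC1, F', hF', hsesF⟩ := hF
    obtain ⟨j, q, hj, hq, hrjq⟩ := hses
    obtain ⟨c1, π, hc1, hπ, hrc⟩ := hsesF
    set N : Submodule A W := LinearMap.range (j.comp c1) with hN
    have hle : LinearMap.ker π ≤ Submodule.comap j N := by
      intro x hx
      have : x ∈ LinearMap.range c1 := by rw [hrc]; exact hx
      obtain ⟨z, rfl⟩ := this
      exact ⟨z, rfl⟩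
    set φ : (↑F ⧸ LinearMap.ker π) →ₗ[A] (↑W ⧸ N) := Submodule.mapQ _ N j hle with hφ
    set eF' : (↑F ⧸ LinearMap.ker π) ≃ₗ[A] (F' : Type u) :=
      π.quotKerEquivOfSurjective hπ with heF'
    have heq : ∀ x : ↑F, eF' (Submodule.Quotient.mk x) = π x := fun x => rfl
    have hNq : N ≤ LinearMap.ker q := by
      rintro _ ⟨z, rfl⟩
      have : (j.comp c1) z ∈ LinearMap.range j := ⟨c1 z, rfl⟩
      rw [hrjq] at this
      exact this
    have hsym : ∀ x : ↑F, (eF'.symm : (F' : Type u) →ₗ[A] (↑F ⧸ LinearMap.ker π)) (π x)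
        = Submodule.Quotient.mk x := by
      intro x
      apply eF'.injective
      rw [LinearEquiv.coe_coe, eF'.apply_symm_apply]
      exact (heq x).symm
    have hφmk : ∀ x : ↑F, φ (Submodule.Quotient.mk x) = Submodule.Quotient.mk (j x) :=
      fun x => rfl
    have hquot : ModuleCat.of A (↑W ⧸ N) ∈ Filt C (a + b) := by
      apply Filt.concat (F := F') (G := G) _ hF' hG
      refine ⟨φ.comp (eF'.symm : (F' : Type u) →ₗ[A] (↑F ⧸ LinearMap.ker π)),
        N.liftQ q hNq, ?_, ?_, ?_⟩
      · intro u v huv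
        apply eF'.symm.injective
        have hinj : Function.Injective φ := by
          intro u v huv
          obtain ⟨x, rfl⟩ := Submodule.mkQ_surjective _ u
          obtain ⟨y, rfl⟩ := Submodule.mkQ_surjective _ v
          simp only [Submodule.mkQ_apply] at huv ⊢
          rw [hφmk, hφmk] at huv
          have h1 : j x - j y ∈ N := (Submodule.Quotient.eq N).mp huv
          obtain ⟨z, hz⟩ := h1
          have h2 : j (c1 z) = j (x - y) := by
            simpa [map_sub] using hz
          have hxy2 : x - y ∈ LinearMap.ker π := by
            rw [← hrc]
            exact ⟨z, hj h2⟩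
          exact (Submodule.Quotient.eq _).mpr hxy2
        exact hinj huv
      · intro y
        obtain ⟨w, hw⟩ := hq y
        exact ⟨Submodule.Quotient.mk w, hw⟩
      · ext u
        simp only [LinearMap.mem_range, LinearMap.mem_ker, LinearMap.comp_apply]
        constructor
        · rintro ⟨y, rfl⟩
          obtain ⟨x, rfl⟩ := hπ y
          show (N.liftQ q hNq)
            (φ ((eF'.symm : (F' : Type u) →ₗ[A] (↑F ⧸ LinearMap.ker π)) (π x))) = 0
          rw [hsym, hφmk]
          have : j x ∈ LinearMap.ker q := hrjq ▸ LinearMap.mem_range_self j x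
          exact (this : q (j x) = 0)
        · intro hu
          obtain ⟨w, rfl⟩ := Submodule.mkQ_surjective _ u
          simp only [Submodule.mkQ_apply] at hu ⊢
          have hqw : q w = 0 := hu
          have : w ∈ LinearMap.range j := by rw [hrjq]; exact hqw
          obtain ⟨x, rfl⟩ := this
          refine ⟨π x, ?_⟩
          show φ ((eF'.symm : (F' : Type u) →ₗ[A] (↑F ⧸ LinearMap.ker π)) (π x))
            = Submodule.Quotient.mk (j x)
          rw [hsym, hφmk]
    have hstep : SES A C1 W (ModuleCat.of A (↑W ⧸ N)) := by
      refine ⟨j.comp c1, N.mkQ, fun x y h => hc1 (hj h), Submodule.mkQ_surjective N, ?_⟩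
      rw [Submodule.ker_mkQ]
    have harith : (a + 1 + b) = (a + b) + 1 := by omega
    rw [harith]
    exact ⟨C1, hC1, ModuleCat.of A (↑W ⧸ N), hquot, hstep⟩

/-! ### `addClosure` API -/

lemma mem_addClosure_of_summand {T : Set (ModuleCat.{u} A)} {M N : ModuleCat.{u} A}
    (h : IsSummand A M N) (hN : N ∈ addClosure A T) : M ∈ addClosure A T := by
  obtain ⟨n, f, hf, hsum⟩ := hN
  exact ⟨n, f, hf, h.trans hsum⟩

lemma triv_mem_addClosure {T : Set (ModuleCat.{u} A)} {M : ModuleCat.{u} A} (hM : Triv M) :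
    M ∈ addClosure A T :=
  ⟨0, Fin.elim0, fun j => j.elim0, IsSummand.of_triv hM⟩

lemma mem_addClosure_self {T : ModuleCat.{u} A} : T ∈ addClosure A {T} := by
  refine ⟨1, fun _ => T, fun _ => rfl, LinearMap.pi (fun _ => LinearMap.id),
    LinearMap.proj 0, ?_⟩
  ext x; rfl

lemma mem_addClosure_singleton {T M : ModuleCat.{u} A} :
    M ∈ addClosure A {T} ↔ ∃ k, IsSummand A M (ModuleCat.of A (Fin k → (T : Type u))) := by
  constructor
  · rintro ⟨n, f, hf, hsum⟩
    have hft : f = fun _ => T := funext (fun j => hf j)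
    rw [hft] at hsum
    exact ⟨n, hsum⟩
  · rintro ⟨k, hk⟩
    exact ⟨k, fun _ => T, fun _ => rfl, hk⟩

lemma addClosure_pi {T : ModuleCat.{u} A} {k : ℕ} (f : Fin k → ModuleCat.{u} A)
    (hf : ∀ j, f j ∈ addClosure A {T}) :
    ModuleCat.of A (∀ j, (f j : Type u)) ∈ addClosure A {T} := by
  have := isSummand_pow_pi f (fun j => mem_addClosure_singleton.mp (hf j))
  obtain ⟨K, hK⟩ := this
  exact mem_addClosure_singleton.mpr ⟨K, hK⟩

lemma addClosure_singleton_mono {T T' : ModuleCat.{u} A}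
    (e : (T : Type u) ≃ₗ[A] (T' : Type u)) :
    addClosure A {T} ⊆ addClosure A {T'} := by
  intro M hM
  obtain ⟨k, hk⟩ := mem_addClosure_singleton.mp hM
  refine mem_addClosure_singleton.mpr ⟨k, hk.trans ?_⟩
  exact IsSummand.pi (M := fun _ : Fin k => T) (X := fun _ => T') (fun _ => IsSummand.of_equiv e)

/-! ### summands of filtered modules vs `bracket` -/

def SF (C : Set (ModuleCat.{u} A)) (n : ℕ) : Set (ModuleCat.{u} A) :=
  { M | ∃ W ∈ Filt C n, IsSummand A M W }

lemma SF.of_summand {C : Set (ModuleCat.{u} A)} {n : ℕ} {M N : ModuleCat.{u} A}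
    (h : IsSummand A M N) (hN : N ∈ SF C n) : M ∈ SF C n := by
  obtain ⟨W, hW, hs⟩ := hN
  exact ⟨W, hW, h.trans hs⟩

lemma bracket_subset_SF (T₀ : ModuleCat.{u} A) :
    ∀ (n : ℕ), 1 ≤ n → ∀ {M : ModuleCat.{u} A}, M ∈ bracket A {T₀} n →
      M ∈ SF (addClosure A {T₀}) n
  | 0, h, _, _ => absurd h (by omega)
  | 1, _, M, hM =>
    ⟨M, mem_filt_of_mem (fun _ ht => triv_mem_addClosure ht) 1 le_rfl hM, IsSummand.refl⟩
  | n+2, _, M, hM => by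
    obtain ⟨r, f, hf, hsum⟩ := hM
    have step : ∀ j, ∃ Ej : ModuleCat.{u} A, IsSummand A (f j) Ej ∧
        Ej ∈ Filt (addClosure A {T₀}) (n+2) := by
      intro j
      obtain ⟨Cj, hCj, Dj, hDj, hses⟩ := hf j
      obtain ⟨Vj, hVj, hDV⟩ := bracket_subset_SF T₀ (n+1) (by omega) hDj
      obtain ⟨Ej, hfE, hsesE⟩ := ses_fatten_quot hses hDV
      exact ⟨Ej, hfE, ⟨Cj, hCj, Vj, hVj, hsesE⟩⟩
    choose E hE hEF using step
    refine ⟨ModuleCat.of A (∀ j, (E j : Type u)), Filt.pi (fun g hg => addClosure_pi g hg) E hEF,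
      hsum.trans (IsSummand.pi hE)⟩

lemma SF_subset_bracket (T : Set (ModuleCat.{u} A)) :
    ∀ (n : ℕ), 1 ≤ n → ∀ {M : ModuleCat.{u} A}, M ∈ SF (addClosure A T) n →
      M ∈ bracket A T n
  | 0, h, _, _ => absurd h (by omega)
  | 1, _, M, hM => by
    obtain ⟨W, hW, hs⟩ := hM
    obtain ⟨C', hC', V, hV, hses⟩ := hW
    obtain ⟨e⟩ := hses.equiv_of_triv_right hV
    exact mem_addClosure_of_summand (hs.trans (IsSummand.of_equiv e.symm)) hC'
  | n+2, _, M, hM => by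
    obtain ⟨W, hW, hs⟩ := hM
    obtain ⟨C', hC', V, hV, hses⟩ := hW
    have hV' : V ∈ bracket A T (n+1) :=
      SF_subset_bracket T (n+1) (by omega) ⟨V, hV, IsSummand.refl⟩
    show M ∈ bullet A (addClosure A T) (bracket A T (n+1))
    refine ⟨1, fun _ => W, fun _ => ⟨C', hC', V, hV', hses⟩, ?_⟩
    exact hs.trans (IsSummand.of_equiv (LinearEquiv.funUnique (Fin 1) A (W : Type u)).symm)

lemma self_mem_bracket {T₀ : ModuleCat.{u} A} {n : ℕ} (hn : 1 ≤ n) :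
    T₀ ∈ bracket A {T₀} n :=
  SF_subset_bracket {T₀} n hn
    ⟨T₀, mem_filt_of_mem (fun _ ht => triv_mem_addClosure ht) n hn mem_addClosure_self,
      IsSummand.refl⟩

/-! ### Composition of brackets -/

lemma filt_comp {T₀ S V : ModuleCat.{u} A} {b : ℕ} (hV : V ∈ Filt (addClosure A {T₀}) b)
    (hSV : IsSummand A S V) :
    ∀ (a : ℕ) {W : ModuleCat.{u} A}, W ∈ Filt (addClosure A {S}) a →
      ∃ W₂ : ModuleCat.{u} A, IsSummand A W W₂ ∧ W₂ ∈ Filt (addClosure A {T₀}) (a * b)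
  | 0, W, hW => by
    rw [Nat.zero_mul]
    exact ⟨W, IsSummand.refl, hW⟩
  | a+1, W, hW => by
    obtain ⟨U, hU, W', hW', hses⟩ := hW
    obtain ⟨k, hUk⟩ := mem_addClosure_singleton.mp hU
    have hSkVk : IsSummand A (ModuleCat.of A (Fin k → (S : Type u)))
        (ModuleCat.of A (Fin k → (V : Type u))) :=
      IsSummand.pi (M := fun _ : Fin k => S) (X := fun _ => V) (fun _ => hSV)
    have hUF : IsSummand A U (ModuleCat.of A (Fin k → (V : Type u))) := hUk.trans hSkVk
    have hVk : ModuleCat.of A (Fin k → (V : Type u)) ∈ Filt (addClosure A {T₀}) b :=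
      Filt.pi (fun g hg => addClosure_pi g hg) (fun _ : Fin k => V) (fun _ => hV)
    obtain ⟨G, hWG, hG⟩ := filt_comp hV hSV a hW'
    obtain ⟨W₁, hWW₁, hses1⟩ := ses_fatten_sub hses hUF
    obtain ⟨W₂, hW₁W₂, hses2⟩ := ses_fatten_quot hses1 hWG
    have hmem := Filt.concat hses2 hVk hG
    have harith : b + a * b = (a+1) * b := by ring
    rw [harith] at hmem
    exact ⟨W₂, hWW₁.trans hW₁W₂, hmem⟩

lemma SF_comp {T₀ S : ModuleCat.{u} A} {a b : ℕ} (hS : S ∈ SF (addClosure A {T₀}) b)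
    {M : ModuleCat.{u} A} (hM : M ∈ SF (addClosure A {S}) a) :
    M ∈ SF (addClosure A {T₀}) (a * b) := by
  obtain ⟨V, hV, hSV⟩ := hS
  obtain ⟨W, hW, hMW⟩ := hM
  obtain ⟨W₂, hWW₂, hW₂⟩ := filt_comp hV hSV a hW
  exact ⟨W₂, hW₂, hMW.trans hWW₂⟩

/-! ### Horseshoe lemma (projective covers of a SES) -/

lemma horseshoe {Cs W V ZC PC ZV QV : ModuleCat.{u} A}
    (hW : SES A Cs W V) (hC : SES A ZC PC Cs) (hPC : Module.Projective A PC)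
    (hV : SES A ZV QV V) (hQV : Module.Projective A QV) :
    ∃ Z Q : ModuleCat.{u} A, Module.Projective A Q ∧ SES A Z Q W ∧ SES A ZC Z ZV := by
  obtain ⟨ι, ω, hι, hω, hrιω⟩ := hW
  obtain ⟨jC, c, hjC, hc, hrc⟩ := hC
  obtain ⟨jV, pV, hjV, hpV, hrV⟩ := hV
  obtain ⟨l, hl⟩ := Module.projective_lifting_property ω pV hω
  have hlap : ∀ x, ω (l x) = pV x := fun x => congrArg (fun f => f x) hl
  set Q : ModuleCat.{u} A := ModuleCat.of A (↥PC × ↥QV) with hQdef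
  set p : Q →ₗ[A] W :=
    (ι.comp (c.comp (LinearMap.fst A _ _))) + (l.comp (LinearMap.snd A _ _)) with hpdef
  have hpap : ∀ x : ↥PC × ↥QV, p x = ι (c x.1) + l x.2 := fun x => rfl
  have hQproj : Module.Projective A Q := by
    show Module.Projective A (↥PC × ↥QV)
    infer_instance
  have hpsurj : Function.Surjective p := by
    intro w
    obtain ⟨qv, hqv⟩ := hpV (ω w)
    have hmem : w - l qv ∈ LinearMap.ker ω := by
      rw [LinearMap.mem_ker, map_sub, hlap, hqv, sub_self]
    rw [← hrιω] at hmem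
    obtain ⟨u, hu⟩ := hmem
    obtain ⟨a, ha⟩ := hc u
    refine ⟨(a, qv), ?_⟩
    rw [hpap, ha, hu]
    abel
  have hcjC : ∀ z, c (jC z) = 0 := by
    intro z
    have : jC z ∈ LinearMap.ker c := hrc ▸ LinearMap.mem_range_self jC z
    exact this
  have hpVjV : ∀ z, pV (jV z) = 0 := by
    intro z
    have : jV z ∈ LinearMap.ker pV := hrV ▸ LinearMap.mem_range_self jV z
    exact this
  set Z : ModuleCat.{u} A := ModuleCat.of A ↥(LinearMap.ker p) with hZdef
  refine ⟨Z, Q, hQproj, ⟨(LinearMap.ker p).subtype, p, Subtype.val_injective, hpsurj,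
    Submodule.range_subtype _⟩, ?_⟩
  -- second SES : ZC → Z → ZV
  have hf0 : ∀ z : ↥ZC, ((LinearMap.inl A ↥PC ↥QV).comp jC) z ∈ LinearMap.ker p := by
    intro z
    show p (jC z, 0) = 0
    rw [hpap]
    show ι (c (jC z)) + l 0 = 0
    rw [hcjC, map_zero, map_zero, add_zero]
  have hg0 : ∀ z : ↥(LinearMap.ker p),
      ((LinearMap.snd A ↥PC ↥QV).comp (LinearMap.ker p).subtype) z ∈ LinearMap.range jV := by
    intro z
    rw [hrV]
    have hz : p z.1 = 0 := z.2
    have h2 := congrArg ω hz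
    rw [hpap, map_add, map_zero] at h2
    have hι0 : ω (ι (c (z.1 : ↥PC × ↥QV).1)) = 0 := by
      have : ι (c (z.1 : ↥PC × ↥QV).1) ∈ LinearMap.ker ω :=
        hrιω ▸ LinearMap.mem_range_self ι _
      exact this
    rw [hι0, zero_add, hlap] at h2
    exact h2
  set eV := LinearEquiv.ofInjective jV hjV with heV
  set f1 : ↥ZC →ₗ[A] ↥(LinearMap.ker p) :=
    LinearMap.codRestrict (LinearMap.ker p) ((LinearMap.inl A ↥PC ↥QV).comp jC) hf0 with hf1
  set g1 : ↥(LinearMap.ker p) →ₗ[A] ↥(LinearMap.range jV) :=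
    LinearMap.codRestrict (LinearMap.range jV)
      ((LinearMap.snd A ↥PC ↥QV).comp (LinearMap.ker p).subtype) hg0 with hg1
  refine ⟨f1, (eV.symm : ↥(LinearMap.range jV) →ₗ[A] ↥ZV).comp g1, ?_, ?_, ?_⟩
  · intro x y hxy
    apply hjC
    exact congrArg (fun t : ↥(LinearMap.ker p) => (t.1 : ↥PC × ↥QV).1) hxy
  · intro z
    have hωl : l (jV z) ∈ LinearMap.ker ω := by
      rw [LinearMap.mem_ker, hlap]
      exact hpVjV z
    rw [← hrιω] at hωl
    obtain ⟨u, hu⟩ := hωl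
    obtain ⟨a, ha⟩ := hc (-u)
    have hx : p ((a, jV z) : ↥PC × ↥QV) = 0 := by
      rw [hpap, ha, map_neg, hu]
      abel
    refine ⟨⟨(a, jV z), hx⟩, ?_⟩
    show eV.symm (g1 ⟨(a, jV z), hx⟩) = z
    apply eV.injective
    rw [LinearEquiv.apply_symm_apply]
    apply Subtype.ext
    rw [heV, LinearEquiv.ofInjective_apply]
    rfl
  · ext x
    simp only [LinearMap.mem_range, LinearMap.mem_ker, LinearMap.comp_apply]
    constructor
    · rintro ⟨z, rfl⟩
      show eV.symm (g1 (f1 z)) = 0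
      have hval : g1 (f1 z) = 0 := Subtype.ext rfl
      rw [hval, map_zero]
    · intro hx
      have hx' : eV.symm (g1 x) = 0 := hx
      have h1 : g1 x = 0 := by
        rw [← eV.apply_symm_apply (g1 x), hx', map_zero]
      have hsnd : (x.1 : ↥PC × ↥QV).2 = 0 := congrArg Subtype.val h1
      have hpx : p x.1 = 0 := x.2
      rw [hpap, hsnd, map_zero, add_zero] at hpx
      have hc0 : c (x.1 : ↥PC × ↥QV).1 = 0 := hι (hpx.trans (map_zero ι).symm)
      have hmem : (x.1 : ↥PC × ↥QV).1 ∈ LinearMap.range jC := by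
        rw [hrc]; exact hc0
      obtain ⟨z, hz⟩ := hmem
      refine ⟨z, ?_⟩
      apply Subtype.ext
      show ((jC z, 0) : ↥PC × ↥QV) = (x.1 : ↥PC × ↥QV)
      exact Prod.ext hz hsnd.symm

/-! ### The minimal syzygy is a summand of any projective syzygy -/

lemma minimal_syzygy_summand {K X W Z Q : ModuleCat.{u} A}
    (hKX : IsSyzygyOf A K X) (hXW : IsSummand A X W)
    (hZ : SES A Z Q W) (hQ : Module.Projective A Q) : IsSummand A K Z := by
  obtain ⟨P, iK, c, hP, hiK, hc, hrK, hsup⟩ := hKX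
  obtain ⟨e, s, hse⟩ := hXW
  obtain ⟨jZ, p, hjZ, hp, hrZ⟩ := hZ
  have hse' : ∀ x : (X : Type u), s (e x) = x := fun x => by
    simpa using congrArg (fun f => f x) hse
  haveI := hP
  haveI := hQ
  obtain ⟨h, hh⟩ := Module.projective_lifting_property c (s.comp p) hc
  have hhap : ∀ x, c (h x) = s (p x) := fun x => congrArg (fun f => f x) hh
  obtain ⟨t', ht'⟩ := Module.projective_lifting_property p (e.comp c) hp
  have htap : ∀ x, p (t' x) = e (c x) := fun x => congrArg (fun f => f x) ht'
  set φ := h.comp t' with hφ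
  have hcφ : ∀ x, c (φ x) = c x := by
    intro x
    show c (h (t' x)) = c x
    rw [hhap, htap, hse']
  have hsub : LinearMap.ker c ⊔ LinearMap.range φ = ⊤ := by
    rw [eq_top_iff]
    intro x _
    have hmem : x - φ x ∈ LinearMap.ker c := by
      rw [LinearMap.mem_ker, map_sub, hcφ x, sub_self]
    exact Submodule.mem_sup.mpr ⟨x - φ x, hmem, φ x, LinearMap.mem_range_self φ x, by abel⟩
  have hφsurj : Function.Surjective φ := by
    rw [← LinearMap.range_eq_top]
    exact hsup _ hsub
  obtain ⟨ψ, hψ⟩ := Module.projective_lifting_property φ LinearMap.id hφsurj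
  have hφψ : ∀ x, φ (ψ x) = x := fun x => by
    simpa using congrArg (fun f => f x) hψ
  have hcψ : ∀ x, c (ψ x) = c x := fun x => by
    rw [← hcφ (ψ x), hφψ]
  have hKer : ∀ k : (K : Type u), c (iK k) = 0 := by
    intro k
    have : iK k ∈ LinearMap.ker c := hrK ▸ LinearMap.mem_range_self iK k
    exact this
  have hmemZ : ∀ k : (K : Type u), t' (ψ (iK k)) ∈ LinearMap.range jZ := by
    intro k
    rw [hrZ, LinearMap.mem_ker, htap, hcψ, hKer, map_zero]
  have hmemK : ∀ z : (Z : Type u), h (jZ z) ∈ LinearMap.range iK := by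
    intro z
    rw [hrK, LinearMap.mem_ker, hhap]
    have h2 : p (jZ z) = 0 := by
      have : jZ z ∈ LinearMap.ker p := hrZ ▸ LinearMap.mem_range_self jZ z
      exact this
    rw [h2, map_zero]
  set eZ := LinearEquiv.ofInjective jZ hjZ with heZ
  set eK := LinearEquiv.ofInjective iK hiK with heK
  set i : (K : Type u) →ₗ[A] (Z : Type u) :=
    (eZ.symm : ↥(LinearMap.range jZ) →ₗ[A] (Z : Type u)).comp
      (LinearMap.codRestrict (LinearMap.range jZ) ((t'.comp ψ).comp iK) hmemZ) with hi
  set r : (Z : Type u) →ₗ[A] (K : Type u) :=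
    (eK.symm : ↥(LinearMap.range iK) →ₗ[A] (K : Type u)).comp
      (LinearMap.codRestrict (LinearMap.range iK) (h.comp jZ) hmemK) with hr
  refine ⟨i, r, ?_⟩
  ext k
  show eK.symm (LinearMap.codRestrict (LinearMap.range iK) (h.comp jZ) hmemK (i k)) = k
  have hjZi : jZ (i k) = t' (ψ (iK k)) := by
    show jZ (eZ.symm (LinearMap.codRestrict (LinearMap.range jZ) ((t'.comp ψ).comp iK) hmemZ k))
      = t' (ψ (iK k))
    rw [LinearEquiv.ofInjective_symm_apply (h := hjZ)]
    rfl
  have hval : (LinearMap.codRestrict (LinearMap.range iK) (h.comp jZ) hmemK (i k))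
      = eK k := by
    apply Subtype.ext
    show h (jZ (i k)) = ((eK k : ↥(LinearMap.range iK)) : (P : Type u))
    rw [hjZi, heK, LinearEquiv.ofInjective_apply]
    exact hφψ (iK k)
  rw [hval, LinearEquiv.symm_apply_apply]

/-! ### Syzygies of filtered modules -/

lemma filt_syzygy {Y PY L1 : ModuleCat.{u} A} (hcov : SES A L1 PY Y)
    (hPY : Module.Projective A PY) :
    ∀ (n : ℕ) {W : ModuleCat.{u} A}, W ∈ Filt (addClosure A {Y}) n →
      ∃ (W₂ Q Z : ModuleCat.{u} A), IsSummand A W W₂ ∧ Module.Projective A Q ∧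
        SES A Z Q W₂ ∧ Z ∈ Filt (addClosure A {L1}) n
  | 0, W, hW => by
    refine ⟨W, ModuleCat.of A (Fin 0 → A), ModuleCat.of A (Fin 0 → A), IsSummand.refl,
      projective_pi_fin inferInstance 0, ?_, ?_⟩
    · refine ⟨LinearMap.id, 0, fun x y hxy => hxy, fun w => ⟨0, (hW w).symm⟩, ?_⟩
      ext x
      simp only [LinearMap.range_id, Submodule.mem_top, LinearMap.mem_ker,
        LinearMap.zero_apply, true_iff]
    · exact fun x => funext (fun j => j.elim0)
  | n+1, W, hW => by
    obtain ⟨U, hU, V, hV, hses⟩ := hW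
    obtain ⟨k, hUk⟩ := mem_addClosure_singleton.mp hU
    obtain ⟨V₂, QV, ZV, hVV₂, hQV, hsesV, hZV⟩ := filt_syzygy hcov hPY n hV
    obtain ⟨W₁, hWW₁, hses1⟩ := ses_fatten_sub hses hUk
    obtain ⟨W₂, hW₁W₂, hses2⟩ := ses_fatten_quot hses1 hVV₂
    have hcovk : SES A (ModuleCat.of A (Fin k → (L1 : Type u)))
        (ModuleCat.of A (Fin k → (PY : Type u))) (ModuleCat.of A (Fin k → (Y : Type u))) :=
      SES.pi (fun _ : Fin k => hcov)
    have hPYk : Module.Projective A (Fin k → (PY : Type u)) := projective_pi_fin hPY k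
    obtain ⟨Z, Q, hQ, hsesZ, hsesZ2⟩ := horseshoe hses2 hcovk hPYk hsesV hQV
    refine ⟨W₂, Q, Z, hWW₁.trans hW₁W₂, hQ, hsesZ, ?_⟩
    exact ⟨ModuleCat.of A (Fin k → (L1 : Type u)),
      addClosure_pi (fun _ : Fin k => L1) (fun _ => mem_addClosure_self), ZV, hZV, hsesZ2⟩

lemma SF_syzygy {X Y K1 L1 : ModuleCat.{u} A} (hK1 : IsSyzygyOf A K1 X)
    (hL1 : IsSyzygyOf A L1 Y) {n : ℕ} (hX : X ∈ SF (addClosure A {Y}) n) :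
    K1 ∈ SF (addClosure A {L1}) n := by
  obtain ⟨PY, jY, cY, hPY, hjY, hcY, hrY, _⟩ := hL1
  have hcov : SES A L1 PY Y := ⟨jY, cY, hjY, hcY, hrY⟩
  obtain ⟨W, hW, hXW⟩ := hX
  obtain ⟨W₂, Q, Z, hWW₂, hQ, hsesZ, hZ⟩ := filt_syzygy hcov hPY n hW
  exact ⟨Z, hZ, minimal_syzygy_summand hK1 (hXW.trans hWW₂) hsesZ hQ⟩

lemma SF_congr {T T' M M' : ModuleCat.{u} A} (eT : (T : Type u) ≃ₗ[A] (T' : Type u))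
    (eM : (M : Type u) ≃ₗ[A] (M' : Type u)) {n : ℕ}
    (h : M ∈ SF (addClosure A {T}) n) : M' ∈ SF (addClosure A {T'}) n := by
  obtain ⟨W, hW, hs⟩ := h
  exact ⟨W, Filt.mono_set (addClosure_singleton_mono eT) hW,
    (IsSummand.of_equiv eM.symm).trans hs⟩

lemma iter_SF {n : ℕ} :
    ∀ (m : ℕ) {X Y K L : ModuleCat.{u} A}, IsIterSyzygyOf A m K X → IsIterSyzygyOf A m L Y →
      X ∈ SF (addClosure A {Y}) n → K ∈ SF (addClosure A {L}) n
  | 0, X, Y, K, L, hK, hL, hX => by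
    obtain ⟨eK⟩ := hK
    obtain ⟨eL⟩ := hL
    exact SF_congr eL.symm eK.symm hX
  | m+1, X, Y, K, L, hK, hL, hX => by
    obtain ⟨K', hK', hKs⟩ := hK
    obtain ⟨L', hL', hLs⟩ := hL
    exact SF_syzygy hKs hLs (iter_SF m hK' hL' hX)

variable (A)
/-- Lemma 2.7(1): if `[X]_{n₁} ⊆ [Y]_{n₂}` (`n₁, n₂ ≥ 1`) then, for every
`m ≥ 0`, `[Ωᵐ X]_{n₁} ⊆ [Ωᵐ Y]_{n₁·n₂}`; stated for any modules `K ≅ Ωᵐ X` and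
`L ≅ Ωᵐ Y` (the `m`-th syzygies, taken along projective covers). -/
theorem stmt3 (R : Type u) [CommRing R] [IsArtinianRing R]
    [Algebra R A] [Module.Finite R A]
    (X Y : ModuleCat.{u} A) (hX : Module.Finite A X) (hY : Module.Finite A Y)
    (n1 n2 : ℕ) (hn1 : 1 ≤ n1) (hn2 : 1 ≤ n2)
    (hXY : bracket A {X} n1 ⊆ bracket A {Y} n2)
    (m : ℕ) (K L : ModuleCat.{u} A)
    (hK : IsIterSyzygyOf A m K X) (hL : IsIterSyzygyOf A m L Y) :
    bracket A {K} n1 ⊆ bracket A {L} (n1 * n2) := by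
  intro M hM
  have hXX : X ∈ bracket A {X} n1 := self_mem_bracket hn1
  have hXsf : X ∈ SF (addClosure A {Y}) n2 := bracket_subset_SF Y n2 hn2 (hXY hXX)
  have hKsf : K ∈ SF (addClosure A {L}) n2 := iter_SF m hK hL hXsf
  have hMsf : M ∈ SF (addClosure A {K}) n1 := bracket_subset_SF K n1 hn1 hM
  have hfin : M ∈ SF (addClosure A {L}) (n1 * n2) := SF_comp hKsf hMsf
  have hpos : 1 ≤ n1 * n2 := by
    calc 1 = 1 * 1 := (Nat.mul_one 1).symm
    _ ≤ n1 * n2 := Nat.mul_le_mul hn1 hn2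
  exact SF_subset_bracket {L} (n1 * n2) hpos hfin

end Paper
end

section
/- Let A and B be separably equivalent Artin algebras. Then ed Ω^i(A-mod) = ed Ω^i(B-mod) for every i ∈ ℕ ∪ {∞}. -/
open CategoryTheory

universe u

namespace Paper

variable (A : Type u) [Ring A]

/-- `F` is an exact functor: it preserves short exact sequences. -/
def ExactFunctor {B : Type u} [Ring B] (F : ModuleCat.{u} A ⥤ ModuleCat.{u} B) : Prop :=
  ∀ ⦃X Y Z : ModuleCat.{u} A⦄ (f : X ⟶ Y) (g : Y ⟶ Z),
    Function.Injective f → Function.Surjective g →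
    LinearMap.range f.hom = LinearMap.ker g.hom →
    Function.Injective (F.map f) ∧ Function.Surjective (F.map g) ∧
      LinearMap.range (F.map f).hom = LinearMap.ker (F.map g).hom

/-- `A` and `B` are separably equivalent: there are additive exact functors
`F = M ⊗_A - : A-Mod → B-Mod` and `G = N ⊗_B - : B-Mod → A-Mod` (tensoring with
bimodules which are projective on either side, hence exact, preserving finitely
generated and projective modules) such that `G ∘ F ≅ Id ⊕ (V ⊗ -)` and
`F ∘ G ≅ Id ⊕ (U ⊗ -)`. -/
def SeparablyEquivalent (B : Type u) [Ring B] : Prop :=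
  ∃ (F : ModuleCat.{u} A ⥤ ModuleCat.{u} B) (G : ModuleCat.{u} B ⥤ ModuleCat.{u} A)
    (U : ModuleCat.{u} B ⥤ ModuleCat.{u} B) (V : ModuleCat.{u} A ⥤ ModuleCat.{u} A),
    F.Additive ∧ G.Additive ∧ ExactFunctor A F ∧ ExactFunctor B G ∧
    (∀ X : ModuleCat.{u} A, Module.Finite A X → Module.Finite B (F.obj X)) ∧
    (∀ Y : ModuleCat.{u} B, Module.Finite B Y → Module.Finite A (G.obj Y)) ∧
    (∀ X : ModuleCat.{u} A, Module.Projective A X → Module.Projective B (F.obj X)) ∧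
    (∀ Y : ModuleCat.{u} B, Module.Projective B Y → Module.Projective A (G.obj Y)) ∧
    (∀ Y : ModuleCat.{u} B,
      Nonempty ((F.obj (G.obj Y) : Type u) ≃ₗ[B] (↥Y × ↥(U.obj Y)))) ∧
    (∀ X : ModuleCat.{u} A,
      Nonempty ((G.obj (F.obj X) : Type u) ≃ₗ[A] (↥X × ↥(V.obj X))))


section Aux

variable {B : Type u} [Ring B]

lemma map_SES' (F : ModuleCat.{u} A ⥤ ModuleCat.{u} B) (hF : ExactFunctor A F)
    {X Y Z : ModuleCat.{u} A} (h : SES A X Y Z) : SES B (F.obj X) (F.obj Y) (F.obj Z) := by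
  obtain ⟨f, g, hf, hg, hfg⟩ := h
  obtain ⟨h1, h2, h3⟩ := hF (X := X) (Y := Y) (Z := Z) (ModuleCat.ofHom f) (ModuleCat.ofHom g) hf hg hfg
  exact ⟨(F.map (ModuleCat.ofHom f)).hom, (F.map (ModuleCat.ofHom g)).hom, h1, h2, h3⟩

lemma summand_trans {M X Y : ModuleCat.{u} A} (h1 : IsSummand A M X)
    (h2 : IsSummand A X Y) : IsSummand A M Y := by
  obtain ⟨i, r, hir⟩ := h1
  obtain ⟨i', r', hir'⟩ := h2
  refine ⟨i'.comp i, r.comp r', ?_⟩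
  ext x
  have : r' (i' (i x)) = i x := congrFun (congrArg DFunLike.coe hir') (i x)
  simp only [LinearMap.comp_apply, this, LinearMap.id_apply]
  exact congrFun (congrArg DFunLike.coe hir) x

lemma summand_pi_map (F : ModuleCat.{u} A ⥤ ModuleCat.{u} B) [F.Additive]
    {n : ℕ} (f : Fin n → ModuleCat.{u} A) {M : ModuleCat.{u} A}
    (h : IsSummand A M (ModuleCat.of A (∀ j, (f j : Type u)))) :
    IsSummand B (F.obj M) (ModuleCat.of B (∀ j, (F.obj (f j) : Type u))) := by
  classical
  set PiA : ModuleCat.{u} A := ModuleCat.of A (∀ j, (f j : Type u)) with hPiA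
  -- categorical projections and inclusions
  let π : ∀ j : Fin n, (PiA ⟶ f j) := fun j => ModuleCat.ofHom (LinearMap.proj j : _ →ₗ[A] (f j : Type u))
  let ι : ∀ j : Fin n, (f j ⟶ PiA) := fun j => ModuleCat.ofHom (LinearMap.single A (fun j => (f j : Type u)) j)
  have key : (∑ j : Fin n, π j ≫ ι j) = 𝟙 PiA := by
    apply ModuleCat.hom_ext; apply LinearMap.ext; intro x
    show (∑ j : Fin n, (π j ≫ ι j)).hom x = x
    rw [ModuleCat.hom_sum, LinearMap.coe_sum, Finset.sum_apply]
    show (∑ j : Fin n, Pi.single j (x j)) = x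
    exact Finset.univ_sum_single x
  -- splitting of F.obj PiA into the product
  let i' : (F.obj PiA : Type u) →ₗ[B] (∀ j, (F.obj (f j) : Type u)) :=
    LinearMap.pi (fun j => (F.map (π j)).hom)
  let r' : (∀ j, (F.obj (f j) : Type u)) →ₗ[B] (F.obj PiA : Type u) :=
    ∑ j : Fin n, (F.map (ι j)).hom.comp (LinearMap.proj j)
  have hri : r'.comp i' = LinearMap.id := by
    ext x
    show (∑ j : Fin n, (F.map (ι j)).hom.comp (LinearMap.proj j)) (i' x) = x
    rw [LinearMap.coe_sum, Finset.sum_apply]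
    have : ∀ j : Fin n, ((F.map (ι j)).hom.comp (LinearMap.proj j)) (i' x)
        = (F.map (π j ≫ ι j)).hom x := by
      intro j
      show (F.map (ι j)).hom ((F.map (π j)).hom x) = (F.map (π j ≫ ι j)).hom x
      rw [F.map_comp]
      rfl
    rw [Finset.sum_congr rfl (fun j _ => this j)]
    have := congrArg (fun φ => φ.hom x) (congrArg F.map key)
    rw [F.map_id] at this
    calc (∑ j : Fin n, (F.map (π j ≫ ι j)).hom x)
        = (∑ j : Fin n, F.map (π j ≫ ι j)).hom x := by
          rw [ModuleCat.hom_sum, LinearMap.coe_sum, Finset.sum_apply]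
      _ = (F.map (∑ j : Fin n, π j ≫ ι j)).hom x := by rw [CategoryTheory.Functor.map_sum]
      _ = x := by rw [congrArg F.map key, F.map_id]; rfl
  -- combine with the given splitting of M
  obtain ⟨i, r, hir⟩ := h
  refine ⟨i'.comp (F.map (ModuleCat.ofHom i : M ⟶ PiA)).hom,
    (F.map (ModuleCat.ofHom r : PiA ⟶ M)).hom.comp r', ?_⟩
  ext x
  have h1 : r'.comp i' ((F.map (ModuleCat.ofHom i : M ⟶ PiA)).hom x)
      = (F.map (ModuleCat.ofHom i : M ⟶ PiA)).hom x :=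
    congrFun (congrArg DFunLike.coe hri) _
  show (F.map (ModuleCat.ofHom r : PiA ⟶ M)).hom
    (r'.comp i' ((F.map (ModuleCat.ofHom i : M ⟶ PiA)).hom x)) = x
  rw [h1]
  have : (ModuleCat.ofHom i : M ⟶ PiA) ≫ (ModuleCat.ofHom r : PiA ⟶ M) = 𝟙 M :=
    ModuleCat.hom_ext hir
  have h2 := congrArg (fun φ => φ.hom x) (congrArg F.map this)
  rw [F.map_comp, F.map_id] at h2
  exact h2

lemma addClosure_map (F : ModuleCat.{u} A ⥤ ModuleCat.{u} B) [F.Additive]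
    {S : Set (ModuleCat.{u} A)} {S' : Set (ModuleCat.{u} B)}
    (hS : ∀ X ∈ S, F.obj X ∈ S') {M : ModuleCat.{u} A} (hM : M ∈ addClosure A S) :
    F.obj M ∈ addClosure B S' := by
  obtain ⟨n, f, hf, hsum⟩ := hM
  exact ⟨n, fun j => F.obj (f j), fun j => hS _ (hf j), summand_pi_map A F f hsum⟩

lemma addClosure_summand {S : Set (ModuleCat.{u} A)} {M X : ModuleCat.{u} A}
    (h : IsSummand A M X) (hX : X ∈ addClosure A S) : M ∈ addClosure A S := by
  obtain ⟨n, f, hf, hsum⟩ := hX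
  exact ⟨n, f, hf, summand_trans A h hsum⟩

lemma bracket_summand {T : Set (ModuleCat.{u} A)} {n : ℕ} {M X : ModuleCat.{u} A}
    (h : IsSummand A M X) (hX : X ∈ bracket A T (n + 1)) : M ∈ bracket A T (n + 1) := by
  cases n with
  | zero => exact addClosure_summand A h hX
  | succ n => exact addClosure_summand A h hX

lemma bracket_map (F : ModuleCat.{u} A ⥤ ModuleCat.{u} B) [F.Additive]
    (hF : ExactFunctor A F) (T : ModuleCat.{u} A) :
    ∀ n : ℕ, ∀ M ∈ bracket A {T} (n + 1), F.obj M ∈ bracket B {F.obj T} (n + 1) := by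
  intro n
  induction n with
  | zero =>
    intro M hM
    exact addClosure_map A F (fun X hX => by rw [Set.mem_singleton_iff] at hX; subst hX; rfl) hM
  | succ n ih =>
    intro M hM
    refine addClosure_map A F ?_ hM
    rintro X ⟨C', hC', D', hD', hses⟩
    exact ⟨F.obj C',
      addClosure_map A F (fun Y hY => by rw [Set.mem_singleton_iff] at hY; subst hY; rfl) hC',
      F.obj D', ih D' hD', map_SES' A F hF hses⟩

lemma ed_le_of (F : ModuleCat.{u} A ⥤ ModuleCat.{u} B) (G : ModuleCat.{u} B ⥤ ModuleCat.{u} A)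
    [F.Additive] (hF : ExactFunctor A F)
    (hFfin : ∀ X : ModuleCat.{u} A, Module.Finite A X → Module.Finite B (F.obj X))
    (CA : Set (ModuleCat.{u} A)) (CB : Set (ModuleCat.{u} B))
    (hGC : ∀ K ∈ CB, G.obj K ∈ CA)
    (hsummand : ∀ K ∈ CB, IsSummand B K (F.obj (G.obj K))) :
    ed B CB ≤ ed A CA := by
  apply sInf_le_sInf
  rintro n ⟨m, rfl, T, hT, hsub⟩
  refine ⟨m, rfl, F.obj T, hFfin T hT, fun K hK => ?_⟩
  exact bracket_summand B (hsummand K hK)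
    (bracket_map A F hF T m (G.obj K) (hsub (hGC K hK)))

lemma summand_of_equiv {M X : ModuleCat.{u} A} {Y : ModuleCat.{u} A}
    (e : (X : Type u) ≃ₗ[A] (↥M × ↥Y)) : IsSummand A M X := by
  refine ⟨e.symm.toLinearMap.comp (LinearMap.inl A ↥M ↥Y),
    (LinearMap.fst A ↥M ↥Y).comp e.toLinearMap, ?_⟩
  ext x
  simp

lemma syzCat_map (F : ModuleCat.{u} A ⥤ ModuleCat.{u} B) (hF : ExactFunctor A F)
    (hFfin : ∀ X : ModuleCat.{u} A, Module.Finite A X → Module.Finite B (F.obj X))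
    (hFproj : ∀ X : ModuleCat.{u} A, Module.Projective A X → Module.Projective B (F.obj X))
    (i : ℕ) {K : ModuleCat.{u} A} (hK : K ∈ SyzCat A i) : F.obj K ∈ SyzCat B i := by
  obtain ⟨hfin, Ks, P, h0, hfinKs, hP, hses⟩ := hK
  refine ⟨hFfin K hfin, fun j => F.obj (Ks j), fun j => F.obj (P j), congrArg F.obj h0,
    fun j => hFfin _ (hfinKs j), fun j => ⟨hFfin _ (hP j).1, hFproj _ (hP j).2⟩,
    fun j => map_SES' A F hF (hses j)⟩

lemma infSyzCat_map (F : ModuleCat.{u} A ⥤ ModuleCat.{u} B) (hF : ExactFunctor A F)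
    (hFfin : ∀ X : ModuleCat.{u} A, Module.Finite A X → Module.Finite B (F.obj X))
    (hFproj : ∀ X : ModuleCat.{u} A, Module.Projective A X → Module.Projective B (F.obj X))
    {K : ModuleCat.{u} A} (hK : K ∈ InfSyzCat A) : F.obj K ∈ InfSyzCat B := by
  obtain ⟨hfin, Ks, P, h0, hfinKs, hP, hses⟩ := hK
  refine ⟨hFfin K hfin, fun j => F.obj (Ks j), fun j => F.obj (P j), congrArg F.obj h0,
    fun j => hFfin _ (hfinKs j), fun j => ⟨hFfin _ (hP j).1, hFproj _ (hP j).2⟩,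
    fun j => map_SES' A F hF (hses j)⟩

lemma sepEquiv_symm {B : Type u} [Ring B] (h : SeparablyEquivalent A B) :
    SeparablyEquivalent B A := by
  obtain ⟨F, G, U, V, hFa, hGa, hFe, hGe, hFf, hGf, hFp, hGp, hFG, hGF⟩ := h
  exact ⟨G, F, V, U, hGa, hFa, hGe, hFe, hGf, hFf, hGp, hFp, hGF, hFG⟩

lemma ed_syz_le {B : Type u} [Ring B] (h : SeparablyEquivalent A B) :
    (∀ i : ℕ, ed B (SyzCat B i) ≤ ed A (SyzCat A i)) ∧
      ed B (InfSyzCat B) ≤ ed A (InfSyzCat A) := by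
  obtain ⟨F, G, U, V, hFa, hGa, hFe, hGe, hFf, hGf, hFp, hGp, hFG, hGF⟩ := h
  haveI := hFa
  constructor
  · intro i
    refine ed_le_of A F G hFe hFf (SyzCat A i) (SyzCat B i)
      (fun K hK => syzCat_map B G hGe hGf hGp i hK)
      (fun K _ => summand_of_equiv B (Y := U.obj K) ?_)
    exact Classical.choice (hFG K)
  · refine ed_le_of A F G hFe hFf (InfSyzCat A) (InfSyzCat B)
      (fun K hK => infSyzCat_map B G hGe hGf hGp hK)
      (fun K _ => summand_of_equiv B (Y := U.obj K) ?_)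
    exact Classical.choice (hFG K)

end Aux

/-- Theorem 5.4: if the Artin algebras `A` and `B` are separably
equivalent, then `ed Ωⁱ(A-mod) = ed Ωⁱ(B-mod)` for every `i ∈ ℕ ∪ {∞}`. -/
theorem stmt18 (R : Type u) [CommRing R] [IsArtinianRing R]
    [Algebra R A] [Module.Finite R A]
    (B : Type u) [Ring B] [Algebra R B] [Module.Finite R B]
    (h : SeparablyEquivalent A B) :
    (∀ i : ℕ, ed A (SyzCat A i) = ed B (SyzCat B i)) ∧
      ed A (InfSyzCat A) = ed B (InfSyzCat B) := by
  have h1 := ed_syz_le A h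
  have h2 := ed_syz_le B (sepEquiv_symm A h)
  exact ⟨fun i => le_antisymm (h2.1 i) (h1.1 i), le_antisymm h2.2 h1.2⟩

end Paper
end
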